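/- Let p ∈ ℂ, r > 0, and let g be a continuous complex-valued function on the circle {w : |w − p| = r}. For z with |z − p| > r define h(z) = −(1/(2πI)) ∮_{C(p,r)} g(w)/(w − z) dw. Then h is holomorphic on {z : |z − p| > r}, h(z) → 0 as |z| → ∞, and for every z with |z − p| > r one has h(z) = Σ_{k=1}^∞ a_k (z − p)^{−k}, where a_k = (1/(2πI)) ∮_{C(p,r)} g(w)(w − p)^{k−1} dw; the series converges uniformly on compact subsets of {z : |z − p| > r}. -/

import Mathlib

noncomputable section

open Complex

/-- Minus the Cauchy transform of `g` over the circle `C(p,r)`. -/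
def cauchyOut (p : ℂ) (r : ℝ) (g : ℂ → ℂ) (z : ℂ) : ℂ :=
  -((1 / (2 * Real.pi * Complex.I)) * ∮ w in C(p, r), g w / (w - z))

/-- The coefficient `a_{k+1} = (1/(2πI)) ∮_{C(p,r)} g(w)(w − p)^k dw`. -/
def laurentCoeff (p : ℂ) (r : ℝ) (g : ℂ → ℂ) (k : ℕ) : ℂ :=
  (1 / (2 * Real.pi * Complex.I)) * ∮ w in C(p, r), g w * (w - p) ^ k

open Metric MeasureTheory Filter Set intervalIntegral in
lemma cauchyOut_hasSum (p : ℂ) (r : ℝ) (hr : 0 < r) (g : ℂ → ℂ)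
    (hg : ContinuousOn g (Metric.sphere p r)) {z : ℂ} (hz : r < dist z p) :
    HasSum (fun k : ℕ => laurentCoeff p r g k * ((z - p) ^ (k + 1))⁻¹)
      (cauchyOut p r g z) := by
  obtain ⟨M, hM⟩ := (isCompact_sphere p r).exists_bound_of_continuousOn hg
  have hM0 : 0 ≤ M :=
    le_trans (norm_nonneg _) (hM _ (circleMap_mem_sphere p hr.le 0))
  set R := dist z p with hRdef
  have hR0 : 0 < R := hr.trans hz
  have hzp : z - p ≠ 0 := sub_ne_zero.2 (dist_pos.1 hR0)
  have h3 : ‖z - p‖ = R := (dist_eq_norm z p).symm ▸ rfl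
  set c : ℝ → ℂ := circleMap p r with hcdef
  have hcp : ∀ θ, ‖c θ - p‖ = r := by
    intro θ
    rw [hcdef, circleMap_sub_center]
    simpa using abs_of_pos hr
  set μ : Measure ℝ := volume.restrict (Set.Ioc (0:ℝ) (2*Real.pi)) with hμ
  set F : ℕ → ℝ → ℂ := fun k θ =>
    deriv (circleMap p r) θ * (g (c θ) * ((c θ - p) ^ k * ((z - p) ^ (k + 1))⁻¹)) with hF
  have hderiv : deriv (circleMap p r) = fun θ => circleMap 0 r θ * Complex.I :=
    funext (deriv_circleMap p r)
  have hgc : Continuous fun θ => g (c θ) :=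
    hg.comp_continuous (continuous_circleMap p r) fun θ => circleMap_mem_sphere p hr.le θ
  have hFcont : ∀ k, Continuous (F k) := by
    intro k
    rw [hF, hderiv]
    exact ((continuous_circleMap 0 r).mul continuous_const).mul
      (hgc.mul ((((continuous_circleMap p r).sub continuous_const).pow k).mul continuous_const))
  have hInt : ∀ k, Integrable (F k) μ := fun k => (hFcont k).integrableOn_Ioc
  have hnormF : ∀ k θ, ‖F k θ‖ = r * (‖g (c θ)‖ * (r ^ k * (R ^ (k+1))⁻¹)) := by
    intro k θ
    have h1 : ‖deriv (circleMap p r) θ‖ = r := by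
      rw [hderiv]
      simp [abs_of_pos hr]
    rw [hF]
    simp only [norm_mul, norm_pow, norm_inv, h1, hcp θ, h3]
  have hbound : ∀ k θ, ‖F k θ‖ ≤ r * M * (r ^ k * (R ^ (k+1))⁻¹) := by
    intro k θ
    rw [hnormF k θ]
    have : ‖g (c θ)‖ ≤ M := hM _ (circleMap_mem_sphere p hr.le θ)
    have h4 : (0:ℝ) ≤ r ^ k * (R ^ (k+1))⁻¹ := by positivity
    calc r * (‖g (c θ)‖ * (r ^ k * (R ^ (k+1))⁻¹))
        ≤ r * (M * (r ^ k * (R ^ (k+1))⁻¹)) := by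
          exact mul_le_mul_of_nonneg_left (mul_le_mul_of_nonneg_right this h4) hr.le
      _ = r * M * (r ^ k * (R ^ (k+1))⁻¹) := by ring
  have hrR : r / R < 1 := (div_lt_one hR0).2 hz
  have hSumNorm : Summable fun k => ∫ θ, ‖F k θ‖ ∂μ := by
    have hsum : Summable fun k : ℕ => (2 * Real.pi) * (r * M * (r ^ k * (R ^ (k+1))⁻¹)) := by
      have : (fun k : ℕ => (2 * Real.pi) * (r * M * (r ^ k * (R ^ (k+1))⁻¹)))
          = fun k : ℕ => ((2 * Real.pi) * (r * M / R)) * (r / R) ^ k := by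
        funext k
        rw [div_pow]
        field_simp
        ring
      rw [this]
      exact (summable_geometric_of_lt_one (by positivity) hrR).mul_left _
    refine Summable.of_nonneg_of_le (fun k => integral_nonneg fun θ => norm_nonneg _)
      (fun k => ?_) hsum
    calc ∫ θ, ‖F k θ‖ ∂μ ≤ ∫ _θ, r * M * (r ^ k * (R ^ (k+1))⁻¹) ∂μ :=
          integral_mono (hInt k).norm (integrable_const _) (hbound k)
      _ = (2 * Real.pi) * (r * M * (r ^ k * (R ^ (k+1))⁻¹)) := by
          rw [MeasureTheory.integral_const]
          rw [hμ]
          simp [Real.volume_Ioc, ENNReal.toReal_ofReal Real.two_pi_pos.le, smul_eq_mul, Real.pi_pos.le]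
  have key := MeasureTheory.hasSum_integral_of_summable_integral_norm hInt hSumNorm
  -- pointwise sum of the series
  have htsum : ∀ θ, (∑' k, F k θ)
      = deriv (circleMap p r) θ * (g (c θ) * (z - c θ)⁻¹) := by
    intro θ
    have hczθ : z - c θ ≠ 0 := by
      rw [sub_ne_zero]
      intro h
      exact hz.ne (by rw [← hcp θ, ← h, h3])
    have hx : ‖(c θ - p) / (z - p)‖ < 1 := by
      rw [norm_div, hcp θ, h3]; exact hrR
    have hgeom := hasSum_geometric_of_norm_lt_one hx
    have h4 : HasSum (fun k : ℕ => (c θ - p) ^ k * ((z - p) ^ (k + 1))⁻¹) ((z - c θ)⁻¹) := by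
      have h5 := hgeom.mul_right (z - p)⁻¹
      have e1 : (fun k : ℕ => ((c θ - p) / (z - p)) ^ k * (z - p)⁻¹)
          = fun k : ℕ => (c θ - p) ^ k * ((z - p) ^ (k + 1))⁻¹ := by
        funext k
        rw [div_pow]
        field_simp [pow_succ]
        ring
      have e2 : (1 - (c θ - p) / (z - p))⁻¹ * (z - p)⁻¹ = (z - c θ)⁻¹ := by
        rw [← mul_inv]
        congr 1
        field_simp
        ring
      rwa [e1, e2] at h5
    exact (((h4.mul_left (g (c θ))).mul_left (deriv (circleMap p r) θ))).tsum_eq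
  have hRHS : ∫ θ, (∑' k, F k θ) ∂μ = ∮ w in C(p, r), g w * (z - w)⁻¹ := by
    rw [circleIntegral, intervalIntegral.integral_of_le Real.two_pi_pos.le]
    simp only [smul_eq_mul]
    simp only [htsum]
    rfl
  have hcircle : (∮ w in C(p, r), g w * (z - w)⁻¹) = -∮ w in C(p, r), g w / (w - z) := by
    have h1 : Set.EqOn (fun w => g w * (z - w)⁻¹) (fun w => -(g w / (w - z))) (sphere p r) := by
      intro w hw
      have hwz : w - z ≠ 0 := by
        rw [sub_ne_zero]
        intro h
        exact hz.ne' (by rw [← mem_sphere.1 hw, h])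
      have hzw : z - w ≠ 0 := fun h => hwz (by rw [sub_eq_zero] at h ⊢; exact h.symm)
      show g w * (z - w)⁻¹ = -(g w / (w - z))
      field_simp
      ring
    rw [circleIntegral.integral_congr hr.le h1, circleIntegral, circleIntegral,
      ← intervalIntegral.integral_neg]
    congr 1
    funext θ
    simp
  have hterm : ∀ k, ∫ θ, F k θ ∂μ
      = (∮ w in C(p, r), g w * (w - p) ^ k) * ((z - p) ^ (k + 1))⁻¹ := by
    intro k
    rw [circleIntegral, intervalIntegral.integral_of_le Real.two_pi_pos.le]
    simp only [smul_eq_mul]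
    rw [← MeasureTheory.integral_mul_const]
    congr 1
    funext θ
    ring
  have final := key.mul_left (1 / (2 * Real.pi * Complex.I))
  have e3 : (fun k => laurentCoeff p r g k * ((z - p) ^ (k + 1))⁻¹)
      = fun k => (1 / (2 * Real.pi * Complex.I)) * ∫ θ, F k θ ∂μ := by
    funext k
    rw [hterm k]
    simp only [laurentCoeff]
    ring
  have e4 : cauchyOut p r g z
      = (1 / (2 * Real.pi * Complex.I)) * ∫ θ, (∑' k, F k θ) ∂μ := by
    rw [hRHS, hcircle]
    simp only [cauchyOut]
    ring
  rw [e3, e4]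
  exact final

open Metric MeasureTheory Filter Set in
lemma norm_two_pi_I_inv : ‖(1 / (2 * Real.pi * Complex.I) : ℂ)‖ = (2 * Real.pi)⁻¹ := by
  simp [abs_of_pos Real.pi_pos]


open Metric MeasureTheory Filter Set in
/-- The exterior Cauchy transform `h(z) = −(1/(2πI)) ∮_{C(p,r)} g(w)/(w − z) dw` is
holomorphic outside the closed disk, tends to `0` at infinity, and equals its Laurent
series `Σ_{k≥1} a_k (z − p)^{−k}`, the convergence being uniform on compact subsets of
`{z : |z − p| > r}`. -/
theorem cauchyOut_laurent_series (p : ℂ) (r : ℝ) (hr : 0 < r) (g : ℂ → ℂ)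
    (hg : ContinuousOn g (Metric.sphere p r)) :
    DifferentiableOn ℂ (cauchyOut p r g) {z : ℂ | r < dist z p} ∧
    Filter.Tendsto (cauchyOut p r g) (Bornology.cobounded ℂ) (nhds 0) ∧
    (∀ z : ℂ, r < dist z p →
      HasSum (fun k : ℕ => laurentCoeff p r g k * ((z - p) ^ (k + 1))⁻¹)
        (cauchyOut p r g z)) ∧
    ∀ K : Set ℂ, IsCompact K → K ⊆ {z : ℂ | r < dist z p} →
      TendstoUniformlyOn
        (fun N z => ∑ k ∈ Finset.range N, laurentCoeff p r g k * ((z - p) ^ (k + 1))⁻¹)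
        (cauchyOut p r g) Filter.atTop K := by
  have hsum : ∀ z : ℂ, r < dist z p →
      HasSum (fun k : ℕ => laurentCoeff p r g k * ((z - p) ^ (k + 1))⁻¹)
        (cauchyOut p r g z) := fun z hz => cauchyOut_hasSum p r hr g hg hz
  obtain ⟨M, hM⟩ := (isCompact_sphere p r).exists_bound_of_continuousOn hg
  have hM0 : 0 ≤ M := le_trans (norm_nonneg _) (hM _ (circleMap_mem_sphere p hr.le 0))
  -- coefficient bound
  have hcoeff : ∀ k, ‖laurentCoeff p r g k‖ ≤ r * M * r ^ k := by
    intro k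
    have hb : ∀ w ∈ Metric.sphere p r, ‖g w * (w - p) ^ k‖ ≤ M * r ^ k := by
      intro w hw
      rw [norm_mul, norm_pow, mem_sphere_iff_norm.1 hw]
      exact mul_le_mul_of_nonneg_right (hM w hw) (by positivity)
    have h1 : ‖laurentCoeff p r g k‖
        = ‖(1 / (2 * Real.pi * Complex.I) : ℂ)‖ * ‖∮ w in C(p, r), g w * (w - p) ^ k‖ := by
      rw [laurentCoeff, norm_mul]
    rw [h1, norm_two_pi_I_inv]
    calc (2 * Real.pi)⁻¹ * ‖∮ w in C(p, r), g w * (w - p) ^ k‖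
        ≤ (2 * Real.pi)⁻¹ * (2 * Real.pi * r * (M * r ^ k)) :=
          mul_le_mul_of_nonneg_left
            (circleIntegral.norm_integral_le_of_norm_le_const hr.le hb) (by positivity)
      _ = r * M * r ^ k := by
          have := Real.pi_pos
          field_simp
  -- uniform convergence on compacts
  have hUnif : ∀ K : Set ℂ, IsCompact K → K ⊆ {z : ℂ | r < dist z p} →
      TendstoUniformlyOn
        (fun N z => ∑ k ∈ Finset.range N, laurentCoeff p r g k * ((z - p) ^ (k + 1))⁻¹)
        (cauchyOut p r g) Filter.atTop K := by
    intro K hK hKU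
    rcases K.eq_empty_or_nonempty with rfl | hne
    · simp [TendstoUniformlyOn]
    · obtain ⟨z₀, hz₀K, hz₀min⟩ :=
        hK.exists_isMinOn hne ((continuous_id.dist continuous_const).continuousOn)
      set R₀ := dist z₀ p with hR₀def
      have hrR₀ : r < R₀ := hKU hz₀K
      have hR₀0 : 0 < R₀ := hr.trans hrR₀
      have hu : Summable fun k : ℕ => (r * M / R₀) * (r / R₀) ^ k :=
        (summable_geometric_of_lt_one (by positivity) ((div_lt_one hR₀0).2 hrR₀)).mul_left _
      have hb : ∀ (k : ℕ) (z : ℂ), z ∈ K →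
          ‖laurentCoeff p r g k * ((z - p) ^ (k + 1))⁻¹‖ ≤ (r * M / R₀) * (r / R₀) ^ k := by
        intro k z hzK
        rw [norm_mul, norm_inv, norm_pow, ← dist_eq_norm z p]
        have h2 : R₀ ≤ dist z p := hz₀min hzK
        have h3 : ((dist z p) ^ (k + 1))⁻¹ ≤ (R₀ ^ (k + 1))⁻¹ :=
          inv_anti₀ (pow_pos hR₀0 _) (pow_le_pow_left₀ hR₀0.le h2 _)
        calc ‖laurentCoeff p r g k‖ * ((dist z p) ^ (k + 1))⁻¹
            ≤ (r * M * r ^ k) * (R₀ ^ (k + 1))⁻¹ :=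
              mul_le_mul (hcoeff k) h3 (by positivity) (by positivity)
          _ = (r * M / R₀) * (r / R₀) ^ k := by
              rw [div_pow]
              field_simp
              ring_nf
      exact (tendstoUniformlyOn_tsum_nat hu hb).congr_right
        fun z hzK => (hsum z (hKU hzK)).tsum_eq
  -- differentiability
  have hopen : IsOpen {z : ℂ | r < dist z p} :=
    isOpen_lt continuous_const (continuous_id.dist continuous_const)
  have hdiff : DifferentiableOn ℂ (cauchyOut p r g) {z : ℂ | r < dist z p} := by
    have hlu : TendstoLocallyUniformlyOn
        (fun N z => ∑ k ∈ Finset.range N, laurentCoeff p r g k * ((z - p) ^ (k + 1))⁻¹)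
        (cauchyOut p r g) Filter.atTop {z : ℂ | r < dist z p} := by
      rw [tendstoLocallyUniformlyOn_iff_forall_isCompact hopen]
      intro K hKU hK
      exact hUnif K hK hKU
    refine hlu.differentiableOn (Filter.Eventually.of_forall fun N => ?_) hopen
    refine DifferentiableOn.fun_sum fun k _ => DifferentiableOn.const_mul ?_ _
    refine DifferentiableOn.inv ((differentiable_id.sub_const p).pow _).differentiableOn ?_
    intro z hz
    exact pow_ne_zero _ (sub_ne_zero.2 (dist_pos.1 (hr.trans hz)))
  -- tendsto 0 at infinity
  have htend0 : Filter.Tendsto (cauchyOut p r g) (Bornology.cobounded ℂ) (nhds 0) := by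
    have hdist := Metric.tendsto_dist_right_cobounded_atTop (α := ℂ) p
    have hb : ∀ᶠ z in Bornology.cobounded ℂ,
        ‖cauchyOut p r g z‖ ≤ r * M / (dist z p - r) := by
      filter_upwards [hdist.eventually_gt_atTop r] with z hz
      have hpos : 0 < dist z p - r := sub_pos.2 hz
      have hbound : ∀ w ∈ Metric.sphere p r, ‖g w / (w - z)‖ ≤ M / (dist z p - r) := by
        intro w hw
        rw [norm_div]
        have hwp : dist w p = r := mem_sphere.1 hw
        have h1 : dist z p - r ≤ ‖w - z‖ := by
          have ht : dist z p ≤ dist z w + dist w p := dist_triangle z w p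
          have h2 : ‖w - z‖ = dist z w := by rw [← dist_eq_norm, dist_comm]
          rw [h2]
          linarith
        exact div_le_div₀ hM0 (hM w hw) hpos h1
      have h4 : ‖cauchyOut p r g z‖
          = ‖(1 / (2 * Real.pi * Complex.I) : ℂ)‖ * ‖∮ w in C(p, r), g w / (w - z)‖ := by
        rw [cauchyOut, norm_neg, norm_mul]
      rw [h4, norm_two_pi_I_inv]
      calc (2 * Real.pi)⁻¹ * ‖∮ w in C(p, r), g w / (w - z)‖
          ≤ (2 * Real.pi)⁻¹ * (2 * Real.pi * r * (M / (dist z p - r))) :=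
            mul_le_mul_of_nonneg_left
              (circleIntegral.norm_integral_le_of_norm_le_const hr.le hbound) (by positivity)
        _ = r * M / (dist z p - r) := by
            have := Real.pi_pos
            field_simp
    have h1 : Filter.Tendsto (fun t : ℝ => r * M / (t - r)) Filter.atTop (nhds 0) := by
      apply Filter.Tendsto.div_atTop tendsto_const_nhds
      simpa only [sub_eq_add_neg, id_eq] using tendsto_atTop_add_const_right Filter.atTop (-r) tendsto_id
    exact squeeze_zero_norm' hb (h1.comp hdist)
  exact ⟨hdiff, htend0, hsum, hUnif⟩
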